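/- Fix reals A < B. There exists a constant C > 0 depending only on B − A with the following property: for every integer m ≥ 2, every integer j* ≥ 0, every continuously differentiable function g: ℝ → ℝ with bounded derivative, and every array of reals D_{j,k} (0 ≤ j ≤ j* + 1, 1 ≤ k ≤ 2^j) satisfying |D_{j,k}| ≤ (m 2^{−j})^{1/4} log m, one has (B − A)^{−1/2} ( |c_0(g)| |D_{0,1}| + ∑_{j=0}^{j*} 2^{j/2} ∑_{k=1}^{2^j} |c_{j,k}(g)| ( |D_{j+1,2k−1}| + |D_{j+1,2k}| ) ) ≤ C ( ‖g‖_∞ + ‖g‖_∞^{1/4} ‖g'‖_∞^{3/4} ) m^{1/4} log m, where ‖g‖_∞ = sup_x |g(x)| and ‖g'‖_∞ = sup_x |g'(x)|. -/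

import Mathlib

open MeasureTheory Real

/-- The dyadic grid points `s_{j,k} = A + k 2^{-j} (B - A)` on `[A, B]`. -/
noncomputable def haarPt (A B : ℝ) (j k : ℕ) : ℝ := A + k * (B - A) / 2 ^ j

/-- The dyadic subinterval `I_{j,k} = (s_{j,k-1}, s_{j,k}]` of `[A, B]`. -/
noncomputable def haarI (A B : ℝ) (j k : ℕ) : Set ℝ :=
  Set.Ioc (haarPt A B j (k - 1)) (haarPt A B j k)

/-- The coarsest Haar basis function `h_0 = (B - A)^{-1/2} 1_{I_{0,1}}`. -/
noncomputable def haarH0 (A B : ℝ) (x : ℝ) : ℝ :=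
  (Real.sqrt (B - A))⁻¹ * (haarI A B 0 1).indicator 1 x

/-- The Haar basis function
`h_{j,k} = (B - A)^{-1/2} 2^{j/2} (1_{I_{j+1,2k-1}} - 1_{I_{j+1,2k}})`. -/
noncomputable def haarH (A B : ℝ) (j k : ℕ) (x : ℝ) : ℝ :=
  (Real.sqrt (B - A))⁻¹ * Real.sqrt (2 ^ j) *
    ((haarI A B (j + 1) (2 * k - 1)).indicator 1 x - (haarI A B (j + 1) (2 * k)).indicator 1 x)

/-- The zeroth Haar coefficient `c_0(g) = ∫_A^B g(t) h_0(t) dt`. -/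
noncomputable def haarC0 (A B : ℝ) (g : ℝ → ℝ) : ℝ := ∫ t in A..B, g t * haarH0 A B t

/-- The Haar coefficient `c_{j,k}(g) = ∫_A^B g(t) h_{j,k}(t) dt`. -/
noncomputable def haarC (A B : ℝ) (j k : ℕ) (g : ℝ → ℝ) : ℝ :=
  ∫ t in A..B, g t * haarH A B j k t


open Finset

lemma geom_head (n : ℕ) :
    ∑ j ∈ range n, (2:ℝ) ^ ((3:ℝ)/4 * j) ≤ 4 * 2 ^ ((3:ℝ)/4 * n) := by
  induction n with
  | zero => simp
  | succ n ih =>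
    rw [Finset.sum_range_succ]
    have h1 : (2:ℝ) ^ ((3:ℝ)/4 * (n+1:ℕ)) = 2 ^ ((3:ℝ)/4) * 2 ^ ((3:ℝ)/4 * n) := by
      push_cast
      rw [← Real.rpow_add two_pos]
      ring_nf
    have h2 : (5:ℝ)/4 ≤ (2:ℝ) ^ ((3:ℝ)/4) := by
      have h4 : ((5:ℝ)/4) ^ (4:ℕ) ≤ ((2:ℝ) ^ ((3:ℝ)/4)) ^ (4:ℕ) := by
        rw [← Real.rpow_natCast ((2:ℝ) ^ ((3:ℝ)/4)) 4, ← Real.rpow_mul two_pos.le]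
        norm_num
      exact le_of_pow_le_pow_left₀ (n := 4) (by norm_num) (by positivity) h4
    have hp : (0:ℝ) < 2 ^ ((3:ℝ)/4 * n) := by positivity
    calc ∑ j ∈ range n, (2:ℝ) ^ ((3:ℝ)/4 * j) + 2 ^ ((3:ℝ)/4 * n)
        ≤ 4 * 2 ^ ((3:ℝ)/4 * n) + 2 ^ ((3:ℝ)/4 * n) := by linarith
      _ = 5 * 2 ^ ((3:ℝ)/4 * n) := by ring
      _ ≤ 4 * (2 ^ ((3:ℝ)/4) * 2 ^ ((3:ℝ)/4 * n)) := by nlinarith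
      _ = 4 * 2 ^ ((3:ℝ)/4 * (n+1:ℕ)) := by rw [h1]

lemma geom_tail (n : ℕ) :
    ∑ j ∈ range n, (2:ℝ) ^ (-(1:ℝ)/4 * j) ≤ 7 := by
  induction n with
  | zero => simp
  | succ n ih =>
    rw [Finset.sum_range_succ']
    have key : ∀ i : ℕ, (2:ℝ) ^ (-(1:ℝ)/4 * (i+1:ℕ)) = 2 ^ (-(1:ℝ)/4) * 2 ^ (-(1:ℝ)/4 * i) := by
      intro i
      push_cast
      rw [← Real.rpow_add two_pos]
      ring_nf
    have h2 : (2:ℝ) ^ (-(1:ℝ)/4) ≤ 6/7 := by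
      rw [show (-(1:ℝ)/4) = -(1/4) by ring, Real.rpow_neg two_pos.le]
      rw [inv_le_comm₀ (by positivity) (by norm_num), show ((6:ℝ)/7)⁻¹ = 7/6 by norm_num]
      have h4 : ((7:ℝ)/6) ^ (4:ℕ) ≤ ((2:ℝ) ^ ((1:ℝ)/4)) ^ (4:ℕ) := by
        rw [← Real.rpow_natCast ((2:ℝ) ^ ((1:ℝ)/4)) 4, ← Real.rpow_mul two_pos.le]
        norm_num
      exact le_of_pow_le_pow_left₀ (n := 4) (by norm_num) (by positivity) h4
    calc ∑ i ∈ range n, (2:ℝ) ^ (-(1:ℝ)/4 * (i+1:ℕ)) + 2 ^ (-(1:ℝ)/4 * (0:ℕ))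
        = 2 ^ (-(1:ℝ)/4) * (∑ i ∈ range n, (2:ℝ) ^ (-(1:ℝ)/4 * i)) + 1 := by
          rw [Finset.mul_sum]
          congr 1
          · exact Finset.sum_congr rfl fun i _ => key i
          · norm_num
      _ ≤ 6/7 * 7 + 1 := by
          gcongr <;> first
            | exact Finset.sum_nonneg fun i _ => by positivity
            | exact ih
            | exact h2
      _ ≤ 7 := by norm_num

lemma sum_min_j0 (a b : ℝ) (ha : 0 ≤ a) (hb : 0 ≤ b) (n j0 : ℕ) :
    ∑ j ∈ range n, min (a * 2 ^ ((3:ℝ)/4 * j)) (b * 2 ^ (-(1:ℝ)/4 * j))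
      ≤ 4 * a * 2 ^ ((3:ℝ)/4 * j0) + 7 * b * 2 ^ (-(1:ℝ)/4 * j0) := by
  have step : ∀ j ∈ range n, min (a * 2 ^ ((3:ℝ)/4*(j:ℕ))) (b * 2^(-(1:ℝ)/4*(j:ℕ))) ≤
      (if j < j0 then a * 2 ^ ((3:ℝ)/4*(j:ℕ)) else 0)
        + (if j < j0 then 0 else b * 2^(-(1:ℝ)/4*(j:ℕ))) := by
    intro j _
    by_cases h : j < j0 <;> simp only [h, if_true, if_false, add_zero, zero_add]
    · exact min_le_left _ _
    · exact min_le_right _ _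
  refine le_trans (Finset.sum_le_sum step) ?_
  rw [Finset.sum_add_distrib]
  have hS1 : ∑ j ∈ range n, (if j < j0 then a * 2 ^ ((3:ℝ)/4*(j:ℕ)) else 0)
      ≤ 4 * a * 2 ^ ((3:ℝ)/4 * j0) := by
    rw [← Finset.sum_filter]
    have hsub : (range n).filter (· < j0) ⊆ range j0 := by
      intro x hx
      simp only [Finset.mem_filter, Finset.mem_range] at hx ⊢
      exact hx.2
    calc ∑ j ∈ (range n).filter (· < j0), a * 2 ^ ((3:ℝ)/4*(j:ℕ))
        ≤ ∑ j ∈ range j0, a * 2 ^ ((3:ℝ)/4*(j:ℕ)) :=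
          Finset.sum_le_sum_of_subset_of_nonneg hsub (fun i _ _ => by positivity)
      _ = a * ∑ j ∈ range j0, 2 ^ ((3:ℝ)/4*(j:ℕ)) := by rw [Finset.mul_sum]
      _ ≤ a * (4 * 2 ^ ((3:ℝ)/4 * j0)) := by
          have := geom_head j0
          nlinarith [Finset.sum_nonneg (fun j (_ : j ∈ range j0) =>
            le_of_lt (Real.rpow_pos_of_pos two_pos ((3:ℝ)/4*(j:ℕ))))]
      _ = 4 * a * 2 ^ ((3:ℝ)/4 * j0) := by ring
  have hS2 : ∑ j ∈ range n, (if j < j0 then 0 else b * 2^(-(1:ℝ)/4*(j:ℕ)))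
      ≤ 7 * b * 2 ^ (-(1:ℝ)/4 * j0) := by
    have hflip : ∀ j, (if j < j0 then (0:ℝ) else b * 2^(-(1:ℝ)/4*(j:ℕ)))
        = (if j0 ≤ j then b * 2^(-(1:ℝ)/4*(j:ℕ)) else 0) := by
      intro j; rcases lt_or_ge j j0 with h | h
      · simp [h, Nat.not_le.mpr h]
      · simp [h, Nat.not_lt.mpr h]
    simp_rw [hflip]
    rw [← Finset.sum_filter]
    have hset : (range n).filter (fun j => j0 ≤ j) = Finset.Ico j0 n := by
      ext x; simp [Finset.mem_filter, Finset.mem_Ico]; omega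
    rw [hset, Finset.sum_Ico_eq_sum_range]
    have hterm : ∀ i : ℕ, b * 2^(-(1:ℝ)/4*((j0+i:ℕ):ℝ))
        = b * 2 ^ (-(1:ℝ)/4 * j0) * 2^(-(1:ℝ)/4*(i:ℕ)) := by
      intro i
      push_cast
      rw [mul_add, Real.rpow_add two_pos]
      ring
    calc ∑ i ∈ range (n - j0), b * 2^(-(1:ℝ)/4*((j0+i:ℕ):ℝ))
        = b * 2 ^ (-(1:ℝ)/4 * j0) * ∑ i ∈ range (n-j0), 2^(-(1:ℝ)/4*(i:ℕ)) := by
          rw [Finset.mul_sum]; exact Finset.sum_congr rfl fun i _ => hterm i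
      _ ≤ b * 2 ^ (-(1:ℝ)/4 * j0) * 7 := by
          have h7 := geom_tail (n - j0)
          have : (0:ℝ) ≤ b * 2 ^ (-(1:ℝ)/4 * j0) := by positivity
          nlinarith
      _ = 7 * b * 2 ^ (-(1:ℝ)/4 * j0) := by ring
  linarith

lemma rpow_quarter_mul (x : ℝ) (hx : 0 ≤ x) : x ^ ((1:ℝ)/4) * x ^ ((3:ℝ)/4) = x := by
  rw [← Real.rpow_add' hx (by norm_num)]
  norm_num

lemma sum_min_bound (a b : ℝ) (ha : 0 ≤ a) (hb : 0 ≤ b) (n : ℕ) :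
    ∑ j ∈ range n, min (a * 2 ^ ((3:ℝ)/4 * j)) (b * 2 ^ (-(1:ℝ)/4 * j))
      ≤ 14 * (a + a ^ ((1:ℝ)/4) * b ^ ((3:ℝ)/4)) := by
  rcases le_or_gt b a with hba | hab
  · -- j0 = 0
    have h := sum_min_j0 a b ha hb n 0
    simp only [Nat.cast_zero, mul_zero, Real.rpow_zero, mul_one] at h
    have hb' : b ≤ a ^ ((1:ℝ)/4) * b ^ ((3:ℝ)/4) := by
      calc b = b ^ ((1:ℝ)/4) * b ^ ((3:ℝ)/4) := (rpow_quarter_mul b hb).symm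
        _ ≤ a ^ ((1:ℝ)/4) * b ^ ((3:ℝ)/4) := by
            gcongr
    linarith
  · -- a < b
    rcases eq_or_lt_of_le ha with ha0 | ha0
    · -- a = 0 : every min is ≤ 0, and ≥ 0
      have : ∀ j ∈ range n, min (a * 2 ^ ((3:ℝ)/4 * (j:ℕ))) (b * 2 ^ (-(1:ℝ)/4 * (j:ℕ))) = 0 := by
        intro j _
        rw [← ha0]
        simp only [zero_mul]
        exact min_eq_left (by positivity)
      rw [Finset.sum_congr rfl this]
      simp
      positivity
    · set t : ℝ := b / a with ht
      have ht1 : 1 ≤ t := (one_le_div ha0).mpr hab.le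
      have ht0 : 0 < t := lt_of_lt_of_le one_pos ht1
      have hlog : 0 ≤ Real.logb 2 t := Real.logb_nonneg one_lt_two ht1
      set j0 : ℕ := ⌈Real.logb 2 t⌉₊ with hj0
      have h1 : t ≤ 2 ^ (j0:ℝ) := by
        calc t = 2 ^ (Real.logb 2 t) := (Real.rpow_logb two_pos (by norm_num) ht0).symm
          _ ≤ 2 ^ (j0:ℝ) := Real.rpow_le_rpow_of_exponent_le one_le_two (Nat.le_ceil _)
      have h2 : (2:ℝ) ^ (j0:ℝ) ≤ 2 * t := by
        calc (2:ℝ) ^ (j0:ℝ) ≤ 2 ^ (Real.logb 2 t + 1) :=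
              Real.rpow_le_rpow_of_exponent_le one_le_two (le_of_lt (Nat.ceil_lt_add_one hlog))
          _ = 2 ^ (Real.logb 2 t) * 2 := by rw [Real.rpow_add two_pos, Real.rpow_one]
          _ = 2 * t := by rw [Real.rpow_logb two_pos (by norm_num) ht0]; ring
      have key := sum_min_j0 a b ha hb n j0
      have e1 : 4 * a * 2 ^ ((3:ℝ)/4 * j0) ≤ 7 * (a ^ ((1:ℝ)/4) * b ^ ((3:ℝ)/4)) := by
        have : (2:ℝ) ^ ((3:ℝ)/4 * j0) = (2 ^ (j0:ℝ)) ^ ((3:ℝ)/4) := by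
          rw [← Real.rpow_mul two_pos.le]; ring_nf
        rw [this]
        have hle : ((2:ℝ) ^ (j0:ℝ)) ^ ((3:ℝ)/4) ≤ (2*t) ^ ((3:ℝ)/4) :=
          Real.rpow_le_rpow (by positivity) h2 (by norm_num)
        have hsplit : ((2:ℝ)*t) ^ ((3:ℝ)/4) = 2 ^ ((3:ℝ)/4) * t ^ ((3:ℝ)/4) :=
          Real.mul_rpow (by norm_num) ht0.le
        have h74 : (2:ℝ) ^ ((3:ℝ)/4) ≤ 7/4 := by
          have h4 : ((2:ℝ) ^ ((3:ℝ)/4)) ^ (4:ℕ) ≤ ((7:ℝ)/4) ^ (4:ℕ) := by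
            rw [← Real.rpow_natCast ((2:ℝ) ^ ((3:ℝ)/4)) 4, ← Real.rpow_mul two_pos.le]
            norm_num
          exact le_of_pow_le_pow_left₀ (n := 4) (by norm_num) (by norm_num) h4
        have hts : a * t ^ ((3:ℝ)/4) = a ^ ((1:ℝ)/4) * b ^ ((3:ℝ)/4) := by
          have hane : a ^ ((3:ℝ)/4) ≠ 0 := by positivity
          have hdiv : a ^ ((1:ℝ)/4) = a / a ^ ((3:ℝ)/4) := by
            rw [eq_div_iff hane, rpow_quarter_mul a ha]
          rw [ht, Real.div_rpow hb ha, hdiv]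
          field_simp
        have htpos : (0:ℝ) ≤ t ^ ((3:ℝ)/4) := by positivity
        calc 4 * a * ((2:ℝ) ^ (j0:ℝ)) ^ ((3:ℝ)/4) ≤ 4 * a * (2 ^ ((3:ℝ)/4) * t ^ ((3:ℝ)/4)) := by
              rw [← hsplit]; gcongr
          _ ≤ 4 * a * (7/4 * t ^ ((3:ℝ)/4)) := by gcongr
          _ = 7 * (a * t ^ ((3:ℝ)/4)) := by ring
          _ = 7 * (a ^ ((1:ℝ)/4) * b ^ ((3:ℝ)/4)) := by rw [hts]
      have e2 : 7 * b * 2 ^ (-(1:ℝ)/4 * j0) ≤ 7 * (a ^ ((1:ℝ)/4) * b ^ ((3:ℝ)/4)) := by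
        have hrw : (2:ℝ) ^ (-(1:ℝ)/4 * j0) = ((2 ^ (j0:ℝ)) ^ ((1:ℝ)/4))⁻¹ := by
          rw [← Real.rpow_mul two_pos.le, ← Real.rpow_neg two_pos.le]
          ring_nf
        rw [hrw]
        have hle : (t:ℝ) ^ ((1:ℝ)/4) ≤ (2 ^ (j0:ℝ)) ^ ((1:ℝ)/4) :=
          Real.rpow_le_rpow ht0.le h1 (by norm_num)
        have htq : (0:ℝ) < t ^ ((1:ℝ)/4) := Real.rpow_pos_of_pos ht0 _
        have hb0 : 0 < b := ha0.trans hab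
        have htq' : t ^ ((1:ℝ)/4) = b ^ ((1:ℝ)/4) / a ^ ((1:ℝ)/4) := by
          rw [ht, Real.div_rpow hb ha]
        calc 7 * b * (((2:ℝ) ^ (j0:ℝ)) ^ ((1:ℝ)/4))⁻¹
            ≤ 7 * b * (t ^ ((1:ℝ)/4))⁻¹ := by gcongr
          _ = 7 * (a ^ ((1:ℝ)/4) * b ^ ((3:ℝ)/4)) := by
              have hbq : b ^ ((1:ℝ)/4) ≠ 0 := by positivity
              have hbb : b / b ^ ((1:ℝ)/4) = b ^ ((3:ℝ)/4) := by
                rw [eq_comm, eq_div_iff hbq, mul_comm, rpow_quarter_mul b hb]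
              rw [htq', inv_div]
              calc 7 * b * (a ^ ((1:ℝ)/4) / b ^ ((1:ℝ)/4))
                  = 7 * a ^ ((1:ℝ)/4) * (b / b ^ ((1:ℝ)/4)) := by ring
                _ = 7 * (a ^ ((1:ℝ)/4) * b ^ ((3:ℝ)/4)) := by rw [hbb]; ring
      linarith

section Grid
variable {A B : ℝ}

lemma haarPt_mono (hAB : A < B) {j : ℕ} {i i' : ℕ} (h : i ≤ i') : haarPt A B j i ≤ haarPt A B j i' := by
  unfold haarPt
  have : (i:ℝ) ≤ (i':ℝ) := Nat.cast_le.mpr h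
  have hd : (0:ℝ) < B - A := sub_pos.mpr hAB
  have hp : (0:ℝ) < 2 ^ j := by positivity
  gcongr

lemma haarPt_le_B (hAB : A < B) {j : ℕ} {i : ℕ} (h : i ≤ 2 ^ j) : haarPt A B j i ≤ B := by
  have h2 : haarPt A B j (2^j) = B := by
    unfold haarPt
    have hp : (2:ℝ) ^ j ≠ 0 := by positivity
    push_cast
    field_simp
    ring
  calc haarPt A B j i ≤ haarPt A B j (2^j) := haarPt_mono hAB h
    _ = B := h2

lemma A_le_haarPt (hAB : A < B) {j i : ℕ} : A ≤ haarPt A B j i := by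
  unfold haarPt
  have hd : (0:ℝ) < B - A := sub_pos.mpr hAB
  have : (0:ℝ) ≤ (i:ℝ) * (B - A) / 2 ^ j := by positivity
  linarith

lemma haarPt_succ (j i : ℕ) : haarPt A B j (i+1) = haarPt A B j i + (B - A)/2^j := by
  unfold haarPt
  push_cast
  ring

end Grid

/-- rewriting `g * indicator 1` as indicator of `g` -/
lemma mul_indicator_one (g : ℝ → ℝ) (S : Set ℝ) (t : ℝ) :
    g t * S.indicator 1 t = S.indicator g t := by
  by_cases h : t ∈ S <;> simp [h]

lemma integral_mul_indicator {A B c d : ℝ} (hAB : A ≤ B) (hAc : A ≤ c) (hcd : c ≤ d)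
    (hdB : d ≤ B) (g : ℝ → ℝ) :
    ∫ t in A..B, g t * (Set.Ioc c d).indicator 1 t = ∫ t in c..d, g t := by
  have h1 : ∫ t in A..B, g t * (Set.Ioc c d).indicator 1 t
      = ∫ t in A..B, (Set.Ioc c d).indicator g t :=
    intervalIntegral.integral_congr (fun t _ => mul_indicator_one g _ t)
  rw [h1, intervalIntegral.integral_of_le hAB, intervalIntegral.integral_of_le hcd,
    MeasureTheory.setIntegral_indicator measurableSet_Ioc,
    Set.inter_eq_self_of_subset_right (Set.Ioc_subset_Ioc hAc hdB)]

lemma indicator_integrable {c d : ℝ} {g : ℝ → ℝ} (hg : Continuous g) (a b : ℝ) :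
    IntervalIntegrable (fun t => g t * (Set.Ioc c d).indicator 1 t) volume a b := by
  have : (fun t => g t * (Set.Ioc c d).indicator 1 t) = (Set.Ioc c d).indicator g := by
    funext t; exact mul_indicator_one g _ t
  rw [this]
  exact (hg.integrableOn_Ioc.integrable_indicator measurableSet_Ioc).intervalIntegrable

lemma haarC_repr {A B : ℝ} (hAB : A < B) (j k : ℕ) (hk1 : 1 ≤ k) (hk2 : k ≤ 2 ^ j)
    {g : ℝ → ℝ} (hg : Continuous g) :
    haarC A B j k g = (Real.sqrt (B - A))⁻¹ * Real.sqrt (2 ^ j) *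
      ((∫ t in (haarPt A B (j+1) (2*k-1-1))..(haarPt A B (j+1) (2*k-1)), g t)
        - ∫ t in (haarPt A B (j+1) (2*k-1))..(haarPt A B (j+1) (2*k)), g t) := by
  set s := (Real.sqrt (B - A))⁻¹ * Real.sqrt (2 ^ j) with hs
  have hsplit : ∀ t, g t * haarH A B j k t
      = s * (g t * (haarI A B (j+1) (2*k-1)).indicator 1 t
              - g t * (haarI A B (j+1) (2*k)).indicator 1 t) := by
    intro t; unfold haarH; rw [hs]; ring
  have hint1 := indicator_integrable (c := haarPt A B (j+1) (2*k-1-1))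
    (d := haarPt A B (j+1) (2*k-1)) hg A B
  have hint2 := indicator_integrable (c := haarPt A B (j+1) (2*k-1))
    (d := haarPt A B (j+1) (2*k)) hg A B
  have hI1 : haarI A B (j+1) (2*k-1) = Set.Ioc (haarPt A B (j+1) (2*k-1-1)) (haarPt A B (j+1) (2*k-1)) := rfl
  have hI2 : haarI A B (j+1) (2*k) = Set.Ioc (haarPt A B (j+1) (2*k-1)) (haarPt A B (j+1) (2*k)) := rfl
  unfold haarC
  rw [intervalIntegral.integral_congr (fun t _ => hsplit t),
    intervalIntegral.integral_const_mul]
  congr 1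
  rw [hI1, hI2, intervalIntegral.integral_sub hint1 hint2]
  have hc1 : A ≤ haarPt A B (j+1) (2*k-1-1) := A_le_haarPt hAB
  have hm1 : haarPt A B (j+1) (2*k-1-1) ≤ haarPt A B (j+1) (2*k-1) := haarPt_mono hAB (by omega)
  have hm2 : haarPt A B (j+1) (2*k-1) ≤ haarPt A B (j+1) (2*k) := haarPt_mono hAB (by omega)
  have hB1 : haarPt A B (j+1) (2*k-1) ≤ B := haarPt_le_B hAB (by
    have : 2*k ≤ 2^(j+1) := by rw [pow_succ]; omega
    omega)
  have hB2 : haarPt A B (j+1) (2*k) ≤ B := haarPt_le_B hAB (by rw [pow_succ]; omega)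
  rw [integral_mul_indicator hAB.le hc1 hm1 hB1 g,
    integral_mul_indicator hAB.le (hc1.trans hm1) hm2 hB2 g]

lemma abs_indicator_one_le (S : Set ℝ) (t : ℝ) : |S.indicator (1 : ℝ → ℝ) t| ≤ 1 := by
  by_cases h : t ∈ S <;> simp [h]

lemma haarC0_bound {A B : ℝ} (hAB : A < B) {g : ℝ → ℝ} {M : ℝ} (hM : ∀ x, |g x| ≤ M) :
    |haarC0 A B g| ≤ M * Real.sqrt (B - A) := by
  have hΔ : (0:ℝ) < B - A := sub_pos.mpr hAB
  have hs : (0:ℝ) < Real.sqrt (B - A) := Real.sqrt_pos.mpr hΔ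
  have hM0 : 0 ≤ M := (abs_nonneg _).trans (hM 0)
  have hb : ∀ t ∈ Set.uIoc A B, ‖g t * haarH0 A B t‖ ≤ M * (Real.sqrt (B - A))⁻¹ := by
    intro t _
    rw [Real.norm_eq_abs, abs_mul]
    have h1 : |haarH0 A B t| ≤ (Real.sqrt (B - A))⁻¹ := by
      unfold haarH0
      rw [abs_mul, abs_of_nonneg (inv_nonneg.mpr hs.le)]
      have h2 := abs_indicator_one_le (haarI A B 0 1) t
      nlinarith [inv_nonneg.mpr hs.le]
    exact mul_le_mul (hM t) h1 (abs_nonneg _) hM0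
  have hI := intervalIntegral.norm_integral_le_of_norm_le_const hb
  rw [Real.norm_eq_abs] at hI
  calc |haarC0 A B g| ≤ M * (Real.sqrt (B - A))⁻¹ * |B - A| := hI
    _ = M * Real.sqrt (B - A) := by
        rw [abs_of_pos hΔ]
        field_simp
        rw [Real.sq_sqrt hΔ.le]

lemma haarC_size_bound {A B : ℝ} (hAB : A < B) (j k : ℕ) (hk1 : 1 ≤ k) (hk2 : k ≤ 2 ^ j)
    {g : ℝ → ℝ} (hg : Continuous g) {M : ℝ} (hM : ∀ x, |g x| ≤ M) :
    |haarC A B j k g| ≤ (Real.sqrt (B - A))⁻¹ * Real.sqrt (2 ^ j) *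
      (2 * M * ((B - A) / 2 ^ (j+1))) := by
  have hΔ : (0:ℝ) < B - A := sub_pos.mpr hAB
  have hM0 : 0 ≤ M := (abs_nonneg _).trans (hM 0)
  set c := haarPt A B (j+1) (2*k-1-1)
  set d := haarPt A B (j+1) (2*k-1)
  set e := haarPt A B (j+1) (2*k)
  set ℓ : ℝ := (B - A) / 2 ^ (j+1) with hℓ
  have hℓ0 : 0 < ℓ := by positivity
  have hcd : d = c + ℓ := by
    have h := haarPt_succ (A := A) (B := B) (j+1) (2*k-1-1)
    rw [show (2*k-1-1)+1 = 2*k-1 by omega] at h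
    exact h
  have hde : e = d + ℓ := by
    have h := haarPt_succ (A := A) (B := B) (j+1) (2*k-1)
    rw [show (2*k-1)+1 = 2*k by omega] at h
    exact h
  have h1 : |∫ t in c..d, g t| ≤ M * ℓ := by
    have := intervalIntegral.norm_integral_le_of_norm_le_const
      (a := c) (b := d) (C := M) (f := g) (fun t _ => hM t)
    rw [Real.norm_eq_abs] at this
    calc |∫ t in c..d, g t| ≤ M * |d - c| := this
      _ = M * ℓ := by rw [hcd]; rw [show c + ℓ - c = ℓ by ring, abs_of_pos hℓ0]
  have h2 : |∫ t in d..e, g t| ≤ M * ℓ := by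
    have := intervalIntegral.norm_integral_le_of_norm_le_const
      (a := d) (b := e) (C := M) (f := g) (fun t _ => hM t)
    rw [Real.norm_eq_abs] at this
    calc |∫ t in d..e, g t| ≤ M * |e - d| := this
      _ = M * ℓ := by rw [hde]; rw [show d + ℓ - d = ℓ by ring, abs_of_pos hℓ0]
  rw [haarC_repr hAB j k hk1 hk2 hg]
  rw [abs_mul, abs_of_nonneg (by positivity : (0:ℝ) ≤ (Real.sqrt (B-A))⁻¹ * Real.sqrt (2^j))]
  gcongr
  calc |(∫ t in c..d, g t) - ∫ t in d..e, g t| ≤ |∫ t in c..d, g t| + |∫ t in d..e, g t| :=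
        abs_sub _ _
    _ ≤ M * ℓ + M * ℓ := add_le_add h1 h2
    _ = 2 * M * ℓ := by ring

lemma haarC_smooth_bound {A B : ℝ} (hAB : A < B) (j k : ℕ) (hk1 : 1 ≤ k) (hk2 : k ≤ 2 ^ j)
    {g : ℝ → ℝ} (hg : ContDiff ℝ 1 g) {L : ℝ} (hL : ∀ x, |deriv g x| ≤ L) :
    |haarC A B j k g| ≤ (Real.sqrt (B - A))⁻¹ * Real.sqrt (2 ^ j) *
      (L * ((B - A) / 2 ^ (j+1))^2) := by
  have hΔ : (0:ℝ) < B - A := sub_pos.mpr hAB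
  have hgc : Continuous g := hg.continuous
  have hgd : Differentiable ℝ g := hg.differentiable one_ne_zero
  have hL0 : 0 ≤ L := (abs_nonneg _).trans (hL 0)
  set c := haarPt A B (j+1) (2*k-1-1)
  set d := haarPt A B (j+1) (2*k-1)
  set e := haarPt A B (j+1) (2*k)
  set ℓ : ℝ := (B - A) / 2 ^ (j+1) with hℓ
  have hℓ0 : 0 < ℓ := by positivity
  have hcd : d = c + ℓ := by
    have h := haarPt_succ (A := A) (B := B) (j+1) (2*k-1-1)
    rw [show (2*k-1-1)+1 = 2*k-1 by omega] at h
    exact h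
  have hde : e = d + ℓ := by
    have h := haarPt_succ (A := A) (B := B) (j+1) (2*k-1)
    rw [show (2*k-1)+1 = 2*k by omega] at h
    exact h
  have hshift : (∫ t in d..e, g t) = ∫ t in c..d, g (t + ℓ) := by
    rw [intervalIntegral.integral_comp_add_right g ℓ, ← hcd, ← hde]
  have hlip : ∀ x y : ℝ, |g y - g x| ≤ L * |y - x| := by
    intro x y
    have := Convex.norm_image_sub_le_of_norm_deriv_le
      (fun z _ => hgd z) (fun z _ => by rw [Real.norm_eq_abs]; exact hL z)
      convex_univ (Set.mem_univ x) (Set.mem_univ y)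
    simpa [Real.norm_eq_abs] using this
  have hdiff : |(∫ t in c..d, g t) - ∫ t in d..e, g t| ≤ L * ℓ^2 := by
    have hc2 : Continuous (fun t : ℝ => g (t + ℓ)) := hgc.comp (continuous_add_right ℓ)
    rw [hshift, ← intervalIntegral.integral_sub (hgc.intervalIntegrable _ _)
      (hc2.intervalIntegrable _ _)]
    have hpt : ∀ t ∈ Set.uIoc c d, ‖g t - g (t + ℓ)‖ ≤ L * ℓ := by
      intro t _
      rw [Real.norm_eq_abs]
      calc |g t - g (t + ℓ)| ≤ L * |t - (t + ℓ)| := hlip (t + ℓ) t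
        _ = L * ℓ := by rw [show t - (t + ℓ) = -ℓ by ring, abs_neg, abs_of_pos hℓ0]
    have := intervalIntegral.norm_integral_le_of_norm_le_const hpt
    rw [Real.norm_eq_abs] at this
    calc |∫ t in c..d, (g t - g (t + ℓ))| ≤ L * ℓ * |d - c| := this
      _ = L * ℓ^2 := by rw [hcd, show c + ℓ - c = ℓ by ring, abs_of_pos hℓ0]; ring
  rw [haarC_repr hAB j k hk1 hk2 hgc]
  rw [abs_mul, abs_of_nonneg (by positivity : (0:ℝ) ≤ (Real.sqrt (B-A))⁻¹ * Real.sqrt (2^j))]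
  gcongr

lemma aux_final (M X Q d : ℝ) (hM0 : 0 ≤ M) (hX0 : 0 ≤ X) (hQ0 : 0 ≤ Q) (hd : 0 < d) :
    M * Q * 1 + 28 * Q * M * 1 + 28 * Q * X * (1 + d) * 1 ≤ 29 * (1 + d) * (M + X) * Q := by
  nlinarith [mul_nonneg hQ0 hM0, mul_nonneg hQ0 hX0, mul_nonneg (mul_nonneg hQ0 hX0) hd.le,
    mul_nonneg (mul_nonneg hQ0 hM0) hd.le]


/-- Deterministic multiscale (chaining) bound: if the dyadic block discrepancies
`D_{j,k}` satisfy `|D_{j,k}| ≤ (m 2^{-j})^{1/4} log m`, then the Haar-coefficient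
weighted sum is of size `(‖g‖_∞ + ‖g‖_∞^{1/4} ‖g'‖_∞^{3/4}) m^{1/4} log m`,
with a constant depending only on `B - A` (core estimate of Theorem 5.1 of
Grama–Neumann). -/
theorem multiscale_haar_bound :
    ∃ C : ℝ → ℝ, ∀ A B : ℝ, A < B →
      0 < C (B - A) ∧
      ∀ m : ℕ, 2 ≤ m → ∀ jstar : ℕ, ∀ g : ℝ → ℝ,
        ContDiff ℝ 1 g →
        BddAbove (Set.range fun x => |g x|) →
        BddAbove (Set.range fun x => |deriv g x|) →
        ∀ D : ℕ → ℕ → ℝ,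
          (∀ j, j ≤ jstar + 1 → ∀ k, 1 ≤ k → k ≤ 2 ^ j →
            |D j k| ≤ ((m : ℝ) / 2 ^ j) ^ ((1 : ℝ) / 4) * Real.log m) →
          (Real.sqrt (B - A))⁻¹ *
              (|haarC0 A B g| * |D 0 1| +
                ∑ j ∈ Finset.range (jstar + 1), Real.sqrt (2 ^ j) *
                  ∑ k ∈ Finset.Icc 1 (2 ^ j),
                    |haarC A B j k g| * (|D (j + 1) (2 * k - 1)| + |D (j + 1) (2 * k)|))
            ≤ C (B - A) *
                ((⨆ x, |g x|) + (⨆ x, |g x|) ^ ((1 : ℝ) / 4) *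
                  (⨆ x, |deriv g x|) ^ ((3 : ℝ) / 4)) *
                (m : ℝ) ^ ((1 : ℝ) / 4) * Real.log m := by

  refine ⟨fun d => 29 * (1 + |d|), ?_⟩
  intro A B hAB
  have hΔ : (0:ℝ) < B - A := sub_pos.mpr hAB
  refine ⟨by positivity, ?_⟩
  intro m hm jstar g hg hBg hBg' D hD
  set M := ⨆ x, |g x| with hMdef
  set L := ⨆ x, |deriv g x| with hLdef
  have hM : ∀ x, |g x| ≤ M := fun x => le_ciSup hBg x
  have hL : ∀ x, |deriv g x| ≤ L := fun x => le_ciSup hBg' x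
  have hM0 : 0 ≤ M := (abs_nonneg _).trans (hM 0)
  have hL0 : 0 ≤ L := (abs_nonneg _).trans (hL 0)
  have hm1 : (1:ℝ) ≤ (m:ℝ) := by exact_mod_cast (by omega : 1 ≤ m)
  have hlog : 0 ≤ Real.log m := Real.log_nonneg hm1
  set Q : ℝ := (m:ℝ) ^ ((1:ℝ)/4) * Real.log m with hQdef
  have hQ0 : 0 ≤ Q := by positivity
  set s := Real.sqrt (B - A) with hsdef
  have hs : 0 < s := Real.sqrt_pos.mpr hΔ
  have hss : s * s = B - A := Real.mul_self_sqrt hΔ.le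
  set a : ℝ := M * (B - A) with hadef
  set b : ℝ := L * (B - A)^2 / 4 with hbdef
  have ha0 : 0 ≤ a := by positivity
  have hb0 : 0 ≤ b := by positivity
  -- c0 term
  have hc0 : |haarC0 A B g| * |D 0 1| ≤ M * s * Q := by
    have h1 := haarC0_bound hAB hM
    have h2 : |D 0 1| ≤ Q := by
      have := hD 0 (by omega) 1 le_rfl (by norm_num)
      simpa [hQdef] using this
    calc |haarC0 A B g| * |D 0 1| ≤ (M * s) * Q :=
          mul_le_mul h1 h2 (abs_nonneg _) (by positivity)
      _ = M * s * Q := by ring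
  -- per-j bound
  have hTj : ∀ j ∈ Finset.range (jstar+1),
      Real.sqrt ((2:ℝ)^j) * ∑ k ∈ Finset.Icc 1 (2^j),
          |haarC A B j k g| * (|D (j+1) (2*k-1)| + |D (j+1) (2*k)|)
        ≤ s⁻¹ * (2*Q) * min (a * 2^((3:ℝ)/4*(j:ℕ))) (b * 2^(-(1:ℝ)/4*(j:ℕ))) := by
    intro j hj
    have hjle : j ≤ jstar := by simpa [Finset.mem_range, Nat.lt_succ_iff] using hj
    set ℓ : ℝ := (B - A) / 2 ^ (j+1) with hℓdef
    have hℓ0 : 0 < ℓ := by positivity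
    set w : ℝ := (2:ℝ) ^ (-(1:ℝ)/4*(j:ℕ)) with hwdef
    have hw0 : 0 < w := Real.rpow_pos_of_pos two_pos _
    -- D bound
    have hE : ((m:ℝ)/2^(j+1)) ^ ((1:ℝ)/4) * Real.log m ≤ Q * w := by
      have hle : ((m:ℝ)/2^(j+1)) ^ ((1:ℝ)/4) ≤ ((m:ℝ)/2^j) ^ ((1:ℝ)/4) := by
        apply Real.rpow_le_rpow (by positivity) _ (by norm_num)
        apply div_le_div_of_nonneg_left (by positivity) (by positivity)
        exact pow_le_pow_right₀ one_le_two (by omega)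
      have hid : ((m:ℝ)/2^j) ^ ((1:ℝ)/4) = (m:ℝ) ^ ((1:ℝ)/4) * w := by
        rw [Real.div_rpow (by positivity) (by positivity), div_eq_mul_inv]
        congr 1
        rw [← Real.rpow_natCast (2:ℝ) j, ← Real.rpow_mul two_pos.le,
          ← Real.rpow_neg two_pos.le, hwdef]
        congr 1
        ring
      calc ((m:ℝ)/2^(j+1)) ^ ((1:ℝ)/4) * Real.log m
          ≤ ((m:ℝ)/2^j) ^ ((1:ℝ)/4) * Real.log m := by gcongr
        _ = Q * w := by rw [hid, hQdef]; ring
    -- per-k bound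
    have hk : ∀ k ∈ Finset.Icc 1 (2^j),
        |haarC A B j k g| * (|D (j+1) (2*k-1)| + |D (j+1) (2*k)|)
          ≤ (s⁻¹ * Real.sqrt ((2:ℝ)^j) * min (2*M*ℓ) (L*ℓ^2)) * (2*(Q*w)) := by
      intro k hkmem
      rw [Finset.mem_Icc] at hkmem
      obtain ⟨hk1, hk2⟩ := hkmem
      have hpow : (2:ℕ)^(j+1) = 2 * 2^j := by rw [pow_succ]; ring
      have hcmin : |haarC A B j k g| ≤ s⁻¹ * Real.sqrt ((2:ℝ)^j) * min (2*M*ℓ) (L*ℓ^2) := by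
        rcases min_cases (2*M*ℓ) (L*ℓ^2) with ⟨hmin, _⟩ | ⟨hmin, _⟩
        · rw [hmin]; exact haarC_size_bound hAB j k hk1 hk2 hg.continuous hM
        · rw [hmin]; exact haarC_smooth_bound hAB j k hk1 hk2 hg hL
      have hd1 : |D (j+1) (2*k-1)| ≤ Q * w := by
        refine le_trans (hD (j+1) (by omega) (2*k-1) (by omega) (by omega)) hE
      have hd2 : |D (j+1) (2*k)| ≤ Q * w := by
        refine le_trans (hD (j+1) (by omega) (2*k) (by omega) (by omega)) hE
      have hDsum : |D (j+1) (2*k-1)| + |D (j+1) (2*k)| ≤ 2*(Q*w) := by linarith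
      exact mul_le_mul hcmin hDsum (by positivity) (by positivity)
    have hsum : ∑ k ∈ Finset.Icc 1 (2^j),
        |haarC A B j k g| * (|D (j+1) (2*k-1)| + |D (j+1) (2*k)|)
          ≤ (2^j : ℕ) * ((s⁻¹ * Real.sqrt ((2:ℝ)^j) * min (2*M*ℓ) (L*ℓ^2)) * (2*(Q*w))) := by
      have := Finset.sum_le_card_nsmul _ _ _ hk
      rwa [Nat.card_Icc, nsmul_eq_mul, show 2^j + 1 - 1 = 2^j from rfl] at this
    calc Real.sqrt ((2:ℝ)^j) * ∑ k ∈ Finset.Icc 1 (2^j),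
          |haarC A B j k g| * (|D (j+1) (2*k-1)| + |D (j+1) (2*k)|)
        ≤ Real.sqrt ((2:ℝ)^j) * ((2^j : ℕ) *
            ((s⁻¹ * Real.sqrt ((2:ℝ)^j) * min (2*M*ℓ) (L*ℓ^2)) * (2*(Q*w)))) := by
          apply mul_le_mul_of_nonneg_left hsum (Real.sqrt_nonneg _)
      _ = s⁻¹ * (2*Q) * min (a * 2^((3:ℝ)/4*(j:ℕ))) (b * 2^(-(1:ℝ)/4*(j:ℕ))) := by
          push_cast
          have hsq : Real.sqrt ((2:ℝ)^j) * Real.sqrt ((2:ℝ)^j) = (2:ℝ)^j :=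
            Real.mul_self_sqrt (by positivity)
          have hstep1 : Real.sqrt ((2:ℝ)^j) * ((2:ℝ)^j *
              ((s⁻¹ * Real.sqrt ((2:ℝ)^j) * min (2*M*ℓ) (L*ℓ^2)) * (2*(Q*w))))
              = s⁻¹ * (2*Q) * (min (2*M*ℓ) (L*ℓ^2) * ((2:ℝ)^j * (2:ℝ)^j * w)) := by
            rw [show Real.sqrt ((2:ℝ)^j) * ((2:ℝ)^j *
              ((s⁻¹ * Real.sqrt ((2:ℝ)^j) * min (2*M*ℓ) (L*ℓ^2)) * (2*(Q*w))))
              = (Real.sqrt ((2:ℝ)^j) * Real.sqrt ((2:ℝ)^j)) *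
                  ((2:ℝ)^j * (s⁻¹ * min (2*M*ℓ) (L*ℓ^2) * (2*(Q*w)))) from by ring, hsq]
            ring
          rw [hstep1]
          congr 1
          rw [min_mul_of_nonneg _ _ (by positivity : (0:ℝ) ≤ (2:ℝ)^j * (2:ℝ)^j * w)]
          have h2jw : (2:ℝ)^j * w = 2^((3:ℝ)/4*(j:ℕ)) := by
            rw [hwdef, ← Real.rpow_natCast (2:ℝ) j, ← Real.rpow_add two_pos]
            congr 1
            ring
          congr 1
          · -- 2*M*ℓ * (2^j*2^j*w) = a * 2^{3/4 j}
            rw [← h2jw, hℓdef, hadef]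
            rw [pow_succ]
            field_simp
          · -- L*ℓ^2 * (2^j*2^j*w) = b * 2^{-1/4 j}
            rw [hℓdef, hbdef, hwdef]
            rw [pow_succ]
            field_simp
            ring
  -- sum over j
  have hsumj : ∑ j ∈ Finset.range (jstar+1), Real.sqrt ((2:ℝ)^j) *
        ∑ k ∈ Finset.Icc 1 (2^j),
          |haarC A B j k g| * (|D (j+1) (2*k-1)| + |D (j+1) (2*k)|)
      ≤ s⁻¹ * (2*Q) * (14 * (a + a ^ ((1:ℝ)/4) * b ^ ((3:ℝ)/4))) := by
    calc ∑ j ∈ Finset.range (jstar+1), Real.sqrt ((2:ℝ)^j) *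
          ∑ k ∈ Finset.Icc 1 (2^j),
            |haarC A B j k g| * (|D (j+1) (2*k-1)| + |D (j+1) (2*k)|)
        ≤ ∑ j ∈ Finset.range (jstar+1),
            s⁻¹ * (2*Q) * min (a * 2^((3:ℝ)/4*(j:ℕ))) (b * 2^(-(1:ℝ)/4*(j:ℕ))) :=
          Finset.sum_le_sum hTj
      _ = s⁻¹ * (2*Q) * ∑ j ∈ Finset.range (jstar+1),
            min (a * 2^((3:ℝ)/4*(j:ℕ))) (b * 2^(-(1:ℝ)/4*(j:ℕ))) := by
          rw [Finset.mul_sum]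
      _ ≤ s⁻¹ * (2*Q) * (14 * (a + a ^ ((1:ℝ)/4) * b ^ ((3:ℝ)/4))) := by
          apply mul_le_mul_of_nonneg_left (sum_min_bound a b ha0 hb0 _) (by positivity)
  -- final assembly
  have hab : a ^ ((1:ℝ)/4) * b ^ ((3:ℝ)/4)
      ≤ (M ^ ((1:ℝ)/4) * L ^ ((3:ℝ)/4)) * ((B-A) * (B-A) ^ ((3:ℝ)/4)) := by
    have e1 : a ^ ((1:ℝ)/4) = M ^ ((1:ℝ)/4) * (B-A) ^ ((1:ℝ)/4) := by
      rw [hadef, Real.mul_rpow hM0 hΔ.le]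
    have e2 : b ^ ((3:ℝ)/4) ≤ L ^ ((3:ℝ)/4) * ((B-A)^2) ^ ((3:ℝ)/4) := by
      rw [hbdef]
      calc (L * (B-A)^2 / 4) ^ ((3:ℝ)/4) ≤ (L * (B-A)^2) ^ ((3:ℝ)/4) := by
            apply Real.rpow_le_rpow (by positivity) (by nlinarith) (by norm_num)
        _ = L ^ ((3:ℝ)/4) * ((B-A)^2) ^ ((3:ℝ)/4) := Real.mul_rpow hL0 (by positivity)
    have e3 : ((B-A)^2 : ℝ) ^ ((3:ℝ)/4) = (B-A) ^ ((3:ℝ)/2) := by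
      rw [← Real.rpow_natCast (B-A) 2, ← Real.rpow_mul hΔ.le]
      norm_num
    have e4 : (B-A) ^ ((1:ℝ)/4) * (B-A) ^ ((3:ℝ)/2) = (B-A) * (B-A) ^ ((3:ℝ)/4) := by
      rw [← Real.rpow_add hΔ]
      rw [show (1:ℝ)/4 + 3/2 = 1 + 3/4 by norm_num, Real.rpow_add hΔ, Real.rpow_one]
    calc a ^ ((1:ℝ)/4) * b ^ ((3:ℝ)/4)
        ≤ (M ^ ((1:ℝ)/4) * (B-A) ^ ((1:ℝ)/4)) * (L ^ ((3:ℝ)/4) * ((B-A)^2) ^ ((3:ℝ)/4)) := by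
          rw [e1]
          apply mul_le_mul_of_nonneg_left e2 (by positivity)
      _ = (M ^ ((1:ℝ)/4) * L ^ ((3:ℝ)/4)) * ((B-A) ^ ((1:ℝ)/4) * (B-A) ^ ((3:ℝ)/2)) := by
          rw [e3]; ring
      _ = (M ^ ((1:ℝ)/4) * L ^ ((3:ℝ)/4)) * ((B-A) * (B-A) ^ ((3:ℝ)/4)) := by rw [e4]
  have hΔ34 : (B-A) ^ ((3:ℝ)/4) ≤ 1 + (B-A) := by
    rcases le_total (B-A) 1 with h1 | h1
    · calc (B-A) ^ ((3:ℝ)/4) ≤ 1 := Real.rpow_le_one hΔ.le h1 (by norm_num)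
        _ ≤ 1 + (B-A) := by linarith
    · calc (B-A) ^ ((3:ℝ)/4) ≤ (B-A) ^ ((1:ℝ)) :=
          Real.rpow_le_rpow_of_exponent_le h1 (by norm_num)
        _ = B-A := Real.rpow_one _
        _ ≤ 1 + (B-A) := by linarith
  set X := M ^ ((1:ℝ)/4) * L ^ ((3:ℝ)/4) with hXdef
  have hX0 : 0 ≤ X := by positivity
  -- combine
  have hfinal : s⁻¹ * ((M * s * Q) + s⁻¹ * (2*Q) * (14 * (a + X * ((B-A)*(1+(B-A))))))
      ≤ 29 * (1 + (B - A)) * (M + X) * Q := by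
    clear_value M L Q s a b X
    have hsinv : s⁻¹ * s = 1 := inv_mul_cancel₀ hs.ne'
    have hsinv2 : s⁻¹ * s⁻¹ * (B - A) = 1 := by
      rw [← hss]; field_simp
    have expand : s⁻¹ * ((M * s * Q) + s⁻¹ * (2*Q) * (14 * (a + X * ((B-A)*(1+(B-A))))))
        = M * Q * (s⁻¹ * s) + 28 * Q * M * (s⁻¹*s⁻¹*(B-A))
          + 28 * Q * X * (1+(B-A)) * (s⁻¹*s⁻¹*(B-A)) := by
      rw [hadef]; ring
    rw [expand, hsinv, hsinv2]
    exact aux_final M X Q (B-A) hM0 hX0 hQ0 hΔ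
  -- chain
  calc s⁻¹ * (|haarC0 A B g| * |D 0 1| +
        ∑ j ∈ Finset.range (jstar+1), Real.sqrt ((2:ℝ)^j) *
          ∑ k ∈ Finset.Icc 1 (2^j),
            |haarC A B j k g| * (|D (j+1) (2*k-1)| + |D (j+1) (2*k)|))
      ≤ s⁻¹ * ((M * s * Q) + s⁻¹ * (2*Q) * (14 * (a + a ^ ((1:ℝ)/4) * b ^ ((3:ℝ)/4)))) := by
        apply mul_le_mul_of_nonneg_left (add_le_add hc0 hsumj) (by positivity)
    _ ≤ s⁻¹ * ((M * s * Q) + s⁻¹ * (2*Q) * (14 * (a + X * ((B-A)*(1+(B-A)))))) := by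
        have hmono : a ^ ((1:ℝ)/4) * b ^ ((3:ℝ)/4) ≤ X * ((B-A)*(1+(B-A))) := by
          calc a ^ ((1:ℝ)/4) * b ^ ((3:ℝ)/4) ≤ X * ((B-A) * (B-A) ^ ((3:ℝ)/4)) := hab
            _ ≤ X * ((B-A)*(1+(B-A))) := by
                apply mul_le_mul_of_nonneg_left _ hX0
                apply mul_le_mul_of_nonneg_left hΔ34 hΔ.le
        gcongr
    _ ≤ 29 * (1 + (B - A)) * (M + X) * Q := hfinal
    _ = 29 * (1 + |B - A|) * (M + X) * ((m:ℝ) ^ ((1:ℝ)/4)) * Real.log m := by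
        rw [abs_of_pos hΔ, hQdef]; ring
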